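/- arXiv:2412.02049 — 5 statements merged into one kernel-verified Lean document; each statement's English description precedes it below -/
import Mathlib

section
/- For every positive integer x and every natural number n ≥ 1, the integer ⋆^n x (the n-th compositional iterate of ⋆ applied to x) has at least n distinct prime factors. -/
theorem star_iterate_primeFactors (x n : ℕ) (hx : 0 < x) (hn : 1 ≤ n) :
    n ≤ ((fun y => y * (y + 1))^[n] x).primeFactors.card := by
  have key : ∀ m : ℕ, 0 < ((fun y => y * (y + 1))^[m] x) ∧
      m ≤ ((fun y => y * (y + 1))^[m] x).primeFactors.card := by
    intro m
    induction m with
    | zero => exact ⟨hx, Nat.zero_le _⟩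
    | succ k ih =>
      obtain ⟨hpos, hcard⟩ := ih
      set y := (fun y => y * (y + 1))^[k] x with hy
      rw [Function.iterate_succ_apply']
      simp only [← hy]
      constructor
      · positivity
      · have hcop : Nat.Coprime y (y + 1) := by simp
        have hmul : (y * (y + 1)).primeFactors = y.primeFactors ∪ (y + 1).primeFactors :=
          Nat.primeFactors_mul (by omega) (by omega)
        have hdisj := Nat.Coprime.disjoint_primeFactors hcop
        rw [hmul, Finset.card_union_of_disjoint hdisj]
        have h1 : 1 ≤ (y + 1).primeFactors.card :=
          Finset.card_pos.mpr (Nat.nonempty_primeFactors.mpr (by omega))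
        omega
  exact (key n).2
end

section
/- For every pair of coprime positive integers n and d and every positive integer k, there exists a partition of the set {m ∈ ℕ : m ≥ kd} into countably many pairwise disjoint finite sets X_u such that for each u the sum of reciprocals of elements of X_u equals n/d. -/
open Finset

private lemma num_div_le_aux {p q : ℤ} (hp : 0 < p) (hq : 0 < q) : ((p : ℚ)/q).num ≤ p := by
  set s : ℚ := (p:ℚ)/q with hs
  have hq0 : (q:ℚ) ≠ 0 := by positivity
  have hden : (s.den : ℤ) ∣ q := by
    have := Rat.den_dvd p q
    rwa [Rat.divInt_eq_div, ← hs] at this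
  have hdenle : (s.den : ℤ) ≤ q := Int.le_of_dvd hq hden
  have hkey : s.num * q = p * s.den := by
    have h1 : s * q = p := by rw [hs]; field_simp
    have hden0 : (s.den:ℚ) ≠ 0 := by
      have := s.pos
      positivity
    have h3 : (s.num:ℚ) = s * s.den := by
      have h := Rat.num_div_den s
      rw [div_eq_iff hden0] at h
      exact h
    have h2 : (s.num : ℚ) * q = p * s.den := by
      rw [h3, mul_right_comm, h1]
    exact_mod_cast h2
  have h4 : p * (s.den:ℤ) ≤ p * q := by
    exact mul_le_mul_of_nonneg_left hdenle (le_of_lt hp)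
  have h5 : s.num * q ≤ p * q := by rw [hkey]; exact h4
  exact le_of_mul_le_mul_right h5 hq

private lemma greedy : ∀ a : ℕ, ∀ r : ℚ, 0 < r → r.num ≤ (a:ℤ) → ∀ M : ℕ, r < 1/(M:ℚ) →
    ∃ S : Finset ℕ, (∀ x ∈ S, M < x) ∧ ∑ x ∈ S, (1:ℚ)/(x:ℚ) = r := by
  intro a
  induction a with
  | zero =>
    intro r hr hnum M hM
    have := Rat.num_pos.mpr hr
    omega
  | succ a ih =>
    intro r hr hnum M hM
    have hM0 : 0 < M := by
      rcases Nat.eq_zero_or_pos M with h | h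
      · subst h; norm_num at hM; linarith
      · exact h
    set m : ℕ := ⌈r⁻¹⌉₊ with hm
    have hrinv : 0 < r⁻¹ := by positivity
    have hMlt : (M:ℚ) < r⁻¹ := by
      have hMQ : (0:ℚ) < (M:ℚ) := by exact_mod_cast hM0
      rw [one_div] at hM
      have := mul_lt_mul_of_pos_left hM hMQ
      rw [mul_inv_cancel₀ (ne_of_gt hMQ)] at this
      have h2 := mul_lt_mul_of_pos_right this hrinv
      rwa [one_mul, mul_assoc, mul_inv_cancel₀ (ne_of_gt hr), mul_one] at h2
    have hMm : M < m := by
      have h1 : (M:ℚ) < (m:ℚ) := lt_of_lt_of_le hMlt (Nat.le_ceil _)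
      exact_mod_cast h1
    have hm0 : 0 < m := lt_of_le_of_lt (Nat.zero_le M) hMm
    have hmQ : (0:ℚ) < (m:ℚ) := by exact_mod_cast hm0
    have hle : (1:ℚ)/m ≤ r := by
      have h1 : r⁻¹ ≤ (m:ℚ) := Nat.le_ceil _
      calc (1:ℚ)/m ≤ 1/r⁻¹ := one_div_le_one_div_of_le hrinv h1
        _ = r := by rw [one_div, inv_inv]
    set r' := r - 1/m with hr'def
    by_cases h0 : r' = 0
    · refine ⟨{m}, by simpa using hMm, ?_⟩
      have : (1:ℚ)/m = r := by
        have := h0; rw [hr'def] at this; linarith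
      simpa using this
    · have hr'pos : 0 < r' := lt_of_le_of_ne (by rw [hr'def]; linarith) (Ne.symm h0)
      have hm2 : 2 ≤ m := by omega
      have hceil : (m:ℚ) < r⁻¹ + 1 := Nat.ceil_lt_add_one (le_of_lt hrinv)
      have hsub1 : (m:ℚ) - 1 < r⁻¹ := by linarith
      have hm1pos : (0:ℚ) < (m:ℚ) - 1 := by
        have : (2:ℚ) ≤ (m:ℚ) := by exact_mod_cast hm2
        linarith
      have hrlt : r * ((m:ℚ) - 1) < 1 := by
        calc r * ((m:ℚ)-1) < r * r⁻¹ := by exact mul_lt_mul_of_pos_left hsub1 hr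
          _ = 1 := mul_inv_cancel₀ (ne_of_gt hr)
      have e2 : r < 1/((m:ℚ)-1) := by
        rw [lt_div_iff₀ hm1pos]; linarith
      have e4 : 1/((m:ℚ)-1) ≤ 2/(m:ℚ) := by
        rw [div_le_div_iff₀ hm1pos hmQ]
        have : (2:ℚ) ≤ (m:ℚ) := by exact_mod_cast hm2
        linarith
      have hr'lt : r' < 1/(m:ℚ) := by
        have : r < 2/(m:ℚ) := lt_of_lt_of_le e2 e4
        rw [hr'def]
        have h2m : (2:ℚ)/m = 1/m + 1/m := by ring
        linarith [h2m ▸ this]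
      -- numerator decrease
      have hnum0 : (0:ℤ) < r.num := Rat.num_pos.mpr hr
      have hnum0Q : (0:ℚ) < (r.num:ℚ) := by exact_mod_cast hnum0
      have hdenQ : (0:ℚ) < (r.den:ℚ) := by exact_mod_cast r.pos
      have hden0 : (r.den:ℚ) ≠ 0 := ne_of_gt hdenQ
      have hrden : (r.num:ℚ) = r * r.den := by
        have h := Rat.num_div_den r
        rw [div_eq_iff hden0] at h
        exact h
      set p : ℤ := r.num * m - r.den with hp
      set qq : ℤ := (r.den : ℤ) * m with hqdef
      have hqq : 0 < qq := by
        have := r.pos; positivity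
      have hqqQ : (0:ℚ) < (qq:ℚ) := by exact_mod_cast hqq
      have hrep : r' = (p:ℚ)/(qq:ℚ) := by
        have hqqne : ((qq:ℤ):ℚ) ≠ 0 := ne_of_gt hqqQ
        rw [hr'def, eq_div_iff hqqne, hp, hqdef]
        push_cast
        have hm0' : (m:ℚ) ≠ 0 := ne_of_gt hmQ
        field_simp
        linear_combination (-(m:ℚ)) * hrden
      have hppos : 0 < p := by
        by_contra hcon
        push_neg at hcon
        have hpQ : (p:ℚ) ≤ 0 := by exact_mod_cast hcon
        have : (p:ℚ)/(qq:ℚ) ≤ 0 := div_nonpos_of_nonpos_of_nonneg hpQ (le_of_lt hqqQ)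
        rw [← hrep] at this; linarith
      have hde : (r.num:ℚ) * r⁻¹ = (r.den:ℚ) := by
        rw [hrden, mul_comm r ((r.den:ℚ)), mul_assoc, mul_inv_cancel₀ (ne_of_gt hr), mul_one]
      have hplt : p < r.num := by
        have h5 : (r.num:ℚ) * ((m:ℚ)-1) < r.num * r⁻¹ := mul_lt_mul_of_pos_left hsub1 hnum0Q
        rw [hde] at h5
        have h6 : (r.num:ℚ) * ((m:ℚ)-1) = (r.num:ℚ)*(m:ℚ) - r.num := by ring
        rw [h6] at h5
        have h7 : (r.num:ℚ)*(m:ℚ) - (r.den:ℚ) < (r.num:ℚ) := by linarith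
        have h8 : ((p:ℚ)) < (r.num:ℚ) := by rw [hp]; push_cast; linarith
        exact_mod_cast h8
      have hnum' : r'.num ≤ (a:ℤ) := by
        have h6 : r'.num ≤ p := by rw [hrep]; exact num_div_le_aux hppos hqq
        have h7 : r.num ≤ (a:ℤ) + 1 := by exact_mod_cast hnum
        omega
      obtain ⟨S', hS'1, hS'2⟩ := ih r' hr'pos hnum' m hr'lt
      have hmS' : m ∉ S' := fun hmem => absurd (hS'1 m hmem) (lt_irrefl m)
      refine ⟨insert m S', ?_, ?_⟩
      · intro x hx
        rcases Finset.mem_insert.mp hx with h | h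
        · subst h; exact hMm
        · exact lt_trans hMm (hS'1 x h)
      · rw [Finset.sum_insert hmS', hS'2, hr'def]; ring

private lemma range_shift_sum (g : ℕ → ℝ) : ∀ M : ℕ, ∑ i ∈ Finset.range M, g (i+1) = ∑ x ∈ Finset.Ioc 0 M, g x := by
  intro M
  induction M with
  | zero => simp
  | succ M ihM =>
    rw [Finset.sum_range_succ, Finset.sum_Ioc_succ_top (Nat.zero_le M), ihM]

private lemma harm (q : ℚ) (N : ℕ) : ∃ M : ℕ, q < ∑ x ∈ Finset.Ioc N M, (1:ℚ)/(x:ℚ) := by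
  have ht := Real.tendsto_sum_range_one_div_nat_succ_atTop
  have hev := (ht.eventually_gt_atTop ((q:ℝ) + ∑ i ∈ Finset.range N, (1:ℝ)/(i+1))).and
    (Filter.eventually_ge_atTop N)
  obtain ⟨M, hM, hMN⟩ := hev.exists
  refine ⟨M, ?_⟩
  have h1 : ∑ i ∈ Finset.range M, (1:ℝ)/(i+1) = ∑ x ∈ Finset.Ioc 0 M, (1:ℝ)/x := by
    have := range_shift_sum (fun x => (1:ℝ)/x) M
    rw [← this]
    apply Finset.sum_congr rfl
    intro i _
    push_cast
    ring_nf
  have h2 : ∑ i ∈ Finset.range N, (1:ℝ)/(i+1) = ∑ x ∈ Finset.Ioc 0 N, (1:ℝ)/x := by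
    have := range_shift_sum (fun x => (1:ℝ)/x) N
    rw [← this]
    apply Finset.sum_congr rfl
    intro i _
    push_cast
    ring_nf
  have h3 : ∑ x ∈ Finset.Ioc 0 N, (1:ℝ)/x + ∑ x ∈ Finset.Ioc N M, (1:ℝ)/x
      = ∑ x ∈ Finset.Ioc 0 M, (1:ℝ)/x :=
    Finset.sum_Ioc_consecutive _ (Nat.zero_le N) hMN
  have h4 : (q:ℝ) < ∑ x ∈ Finset.Ioc N M, (1:ℝ)/x := by
    rw [h1] at hM
    rw [h2] at hM
    linarith
  have h5 : ((∑ x ∈ Finset.Ioc N M, (1:ℚ)/(x:ℚ) : ℚ) : ℝ) = ∑ x ∈ Finset.Ioc N M, (1:ℝ)/x := by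
    push_cast
    rfl
  rw [← h5] at h4
  exact_mod_cast h4

private lemma egyptian (q : ℚ) (hq : 0 < q) (N : ℕ) :
    ∃ S : Finset ℕ, (∀ x ∈ S, N < x) ∧ ∑ x ∈ S, (1:ℚ)/(x:ℚ) = q := by
  have hex : ∃ M : ℕ, q < ∑ x ∈ Finset.Ioc N M, (1:ℚ)/(x:ℚ) := harm q N
  classical
  set M₀ := Nat.find hex with hM₀def
  have hM₀ : q < ∑ x ∈ Finset.Ioc N M₀, (1:ℚ)/(x:ℚ) := Nat.find_spec hex
  have hNM₀ : N < M₀ := by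
    by_contra h
    push_neg at h
    rw [Finset.Ioc_eq_empty (by omega)] at hM₀
    simp at hM₀
    linarith
  have hmin : ¬ q < ∑ x ∈ Finset.Ioc N (M₀ - 1), (1:ℚ)/(x:ℚ) :=
    Nat.find_min hex (by omega)
  push_neg at hmin
  set s := ∑ x ∈ Finset.Ioc N (M₀ - 1), (1:ℚ)/(x:ℚ) with hs
  have hsplit : ∑ x ∈ Finset.Ioc N M₀, (1:ℚ)/(x:ℚ) = s + 1/(M₀:ℚ) := by
    have h1 : M₀ = (M₀ - 1) + 1 := by omega
    rw [h1, Finset.sum_Ioc_succ_top (by omega : N ≤ M₀ - 1), ← h1, hs]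
  set r := q - s with hrdef
  have hrlt : r < 1/(M₀:ℚ) := by
    rw [hsplit] at hM₀; rw [hrdef]; linarith
  have hrnonneg : 0 ≤ r := by rw [hrdef]; linarith
  have hIoc_gt : ∀ x ∈ Finset.Ioc N (M₀ - 1), N < x := by
    intro x hx; exact (Finset.mem_Ioc.mp hx).1
  rcases eq_or_lt_of_le hrnonneg with h0 | hrpos
  · refine ⟨Finset.Ioc N (M₀ - 1), hIoc_gt, ?_⟩
    have h1 : q - s = 0 := by rw [← hrdef, ← h0]
    linarith
  · obtain ⟨S', hS'1, hS'2⟩ := greedy r.num.toNat r hrpos (by simp) M₀ hrlt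
    have hdisj : Disjoint (Finset.Ioc N (M₀ - 1)) S' := by
      rw [Finset.disjoint_left]
      intro x hx hxS
      have h1 := (Finset.mem_Ioc.mp hx).2
      have h2 := hS'1 x hxS
      omega
    refine ⟨Finset.Ioc N (M₀ - 1) ∪ S', ?_, ?_⟩
    · intro x hx
      rcases Finset.mem_union.mp hx with h | h
      · exact hIoc_gt x h
      · exact lt_trans hNM₀ (hS'1 x h)
    · rw [Finset.sum_union hdisj, ← hs, hS'2, hrdef]; ring

private lemma main_aux (q : ℚ) (c : ℕ) (hc : 0 < c) (hq : ∀ m : ℕ, c ≤ m → (1:ℚ)/(m:ℚ) ≤ q) :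
    ∃ X : ℕ → Finset ℕ,
      (∀ u, (X u).Nonempty) ∧
      (Pairwise fun u v => Disjoint (X u) (X v)) ∧
      (⋃ u, (X u : Set ℕ)) = {m : ℕ | c ≤ m} ∧
      ∀ u, (∑ x ∈ X u, (1 : ℚ) / x) = q := by
  classical
  have hqpos : 0 < q := by
    have h1 := hq c (le_refl c)
    have : (0:ℚ) < 1/(c:ℚ) := by
      have : (0:ℚ) < (c:ℚ) := by exact_mod_cast hc
      positivity
    linarith
  have hex : ∀ U : Finset ℕ, ∃ m, c ≤ m ∧ m ∉ U := by
    intro U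
    refine ⟨max c (U.sup id + 1), le_max_left _ _, fun hmem => ?_⟩
    have h1 : id (max c (U.sup id + 1)) ≤ U.sup id := Finset.le_sup hmem
    simp only [id_eq] at h1
    omega
  set mf : Finset ℕ → ℕ := fun U => Nat.find (hex U) with hmf
  have hmf1 : ∀ U, c ≤ mf U ∧ mf U ∉ U := fun U => Nat.find_spec (hex U)
  have hmfle : ∀ U : Finset ℕ, ∀ m, c ≤ m → m ∉ U → mf U ≤ m :=
    fun U m h1 h2 => Nat.find_le ⟨h1, h2⟩
  have hstep : ∀ U : Finset ℕ, ∃ Y : Finset ℕ,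
      mf U ∈ Y ∧ (∀ x ∈ Y, c ≤ x ∧ x ∉ U) ∧ ∑ x ∈ Y, (1:ℚ)/(x:ℚ) = q := by
    intro U
    obtain ⟨hcm, hnm⟩ := hmf1 U
    set m := mf U with hmdef
    set B := max (U.sup id) m with hB
    have hq1 : (1:ℚ)/(m:ℚ) ≤ q := hq m hcm
    rcases eq_or_lt_of_le hq1 with heq | hlt
    · exact ⟨{m}, Finset.mem_singleton_self m,
        by intro x hx; rw [Finset.mem_singleton] at hx; subst hx; exact ⟨hcm, hnm⟩,
        by simpa using heq⟩
    · obtain ⟨S, hS1, hS2⟩ := egyptian (q - 1/(m:ℚ)) (by linarith) B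
      have hmB : m ≤ B := le_max_right _ _
      have hmS : m ∉ S := fun hmem => absurd (hS1 m hmem) (by omega)
      refine ⟨insert m S, Finset.mem_insert_self _ _, ?_, ?_⟩
      · intro x hx
        rcases Finset.mem_insert.mp hx with h | h
        · subst h; exact ⟨hcm, hnm⟩
        · have hBx := hS1 x h
          constructor
          · omega
          · intro hxU
            have := Finset.le_sup (f := id) hxU
            simp only [id_eq] at this
            omega
      · rw [Finset.sum_insert hmS, hS2]; ring
  choose F hFmem hFprop hFsum using hstep
  set Ud : ℕ → Finset ℕ := fun u => Nat.rec ∅ (fun _ prev => prev ∪ F prev) u with hUd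
  have hUdsucc : ∀ u, Ud (u+1) = Ud u ∪ F (Ud u) := fun u => rfl
  have hmono : ∀ u v, u ≤ v → Ud u ⊆ Ud v := by
    intro u v h
    induction v with
    | zero => have : u = 0 := by omega
              subst this; exact Finset.Subset.refl _
    | succ v ihv =>
      rcases Nat.eq_or_lt_of_le h with h1 | h1
      · subst h1; exact Finset.Subset.refl _
      · have := ihv (by omega)
        rw [hUdsucc]
        exact this.trans (Finset.subset_union_left)
  have hXsub : ∀ u, F (Ud u) ⊆ Ud (u+1) := by
    intro u; rw [hUdsucc]; exact Finset.subset_union_right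
  have hdis : ∀ u v, u < v → Disjoint (F (Ud u)) (F (Ud v)) := by
    intro u v huv
    rw [Finset.disjoint_left]
    intro x hxu hxv
    have h1 : x ∈ Ud v := hmono (u+1) v huv (hXsub u hxu)
    exact (hFprop (Ud v) x hxv).2 h1
  refine ⟨fun u => F (Ud u), fun u => ⟨mf (Ud u), hFmem (Ud u)⟩, ?_, ?_, fun u => hFsum (Ud u)⟩
  · intro u v huv
    rcases lt_or_gt_of_ne huv with h | h
    · exact hdis u v h
    · exact (hdis v u h).symm
  · ext x
    simp only [Set.mem_iUnion, Finset.coe_sort_coe, Set.mem_setOf_eq, Finset.mem_coe]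
    constructor
    · rintro ⟨u, hu⟩
      exact (hFprop (Ud u) x hu).1
    · intro hcx
      by_contra h
      push_neg at h
      have hnotU : ∀ u, x ∉ Ud u := by
        intro u
        induction u with
        | zero => simp [hUd]
        | succ u ihu =>
          rw [hUdsucc]
          intro hmem
          rcases Finset.mem_union.mp hmem with h1 | h1
          · exact ihu h1
          · exact h u h1
      have hle : ∀ u, mf (Ud u) ≤ x := fun u => hmfle (Ud u) x hcx (hnotU u)
      have hkey : ∀ u v : ℕ, u < v → mf (Ud u) ≠ mf (Ud v) := by
        intro u v huv heq
        have h1 : mf (Ud u) ∈ Ud v := hmono (u+1) v huv (hXsub u (hFmem (Ud u)))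
        rw [heq] at h1
        exact (hmf1 (Ud v)).2 h1
      have hinj : Function.Injective (fun u =>
          (⟨mf (Ud u), Finset.mem_Icc.mpr ⟨(hmf1 (Ud u)).1, hle u⟩⟩ : (Finset.Icc c x : Finset ℕ))) := by
        intro u v huv
        by_contra hne
        have heq : mf (Ud u) = mf (Ud v) := congrArg Subtype.val huv
        rcases lt_or_gt_of_ne hne with h1 | h1
        · exact hkey u v h1 heq
        · exact hkey v u h1 heq.symm
      obtain ⟨u, v, hne, heq⟩ := Finite.exists_ne_map_eq_of_infinite (fun u =>
          (⟨mf (Ud u), Finset.mem_Icc.mpr ⟨(hmf1 (Ud u)).1, hle u⟩⟩ : (Finset.Icc c x : Finset ℕ)))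
      exact hne (hinj heq)

theorem partition_into_finite_sets (n d k : ℕ) (hn : 0 < n) (hd : 0 < d) (hk : 0 < k)
    (hcop : Nat.Coprime n d) :
    ∃ X : ℕ → Finset ℕ,
      (∀ u, (X u).Nonempty) ∧
      (Pairwise fun u v => Disjoint (X u) (X v)) ∧
      (⋃ u, (X u : Set ℕ)) = {m : ℕ | k * d ≤ m} ∧
      ∀ u, (∑ x ∈ X u, (1 : ℚ) / x) = n / d := by
  have hc : 0 < k * d := Nat.mul_pos hk hd
  have hq : ∀ m : ℕ, k * d ≤ m → (1:ℚ)/(m:ℚ) ≤ (n:ℚ)/(d:ℚ) := by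
    intro m hm
    have hm0 : 0 < m := by omega
    have hmQ : (0:ℚ) < (m:ℚ) := by exact_mod_cast hm0
    have hdQ : (0:ℚ) < (d:ℚ) := by exact_mod_cast hd
    rw [div_le_div_iff₀ hmQ hdQ]
    have h1 : (d:ℚ) ≤ (m:ℚ) := by
      have : d ≤ m := le_trans (Nat.le_mul_of_pos_left d hk) hm
      exact_mod_cast this
    have h2 : (1:ℚ) ≤ (n:ℚ) := by exact_mod_cast hn
    nlinarith
  exact main_aux ((n:ℚ)/(d:ℚ)) (k*d) hc hq
end

section
/- For every pair of coprime positive integers n and d and every positive integer k, there exists a partition of the set {m ∈ ℕ : m ≥ 2kd} into countably many pairwise disjoint infinite sets Y_j such that for each j the sum of reciprocals of elements of Y_j converges to n/d. -/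
open Set

lemma aux_ap_not_summable (c q : ℕ) (hc : 0 < c) (hq : 0 < q) :
    ¬ Summable (fun t : ℕ => (1:ℝ) / (c + q * t)) := by
  intro h
  apply Real.not_summable_one_div_natCast
  rw [← summable_nat_add_iff 1]
  have h2 : Summable (fun t : ℕ => ((c + q : ℝ)) * (1 / (c + q * t))) := h.mul_left _
  refine h2.of_nonneg_of_le (fun t => by positivity) (fun t => ?_)
  have h1 : (1:ℝ) ≤ c := by exact_mod_cast hc
  have h1q : (1:ℝ) ≤ q := by exact_mod_cast hq
  have ht : (0:ℝ) ≤ t := Nat.cast_nonneg t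
  have e1 : ((c:ℝ) + q) * (1 / (c + q * t)) = (c + q) / (c + q * t) := by ring
  rw [e1]
  push_cast
  rw [div_le_div_iff₀ (by positivity) (by positivity)]
  nlinarith

lemma aux_not_summable_diff {A T : Set ℕ} (hT : (A ∩ T).Finite)
    (h : ¬ Summable (fun a : A => (1:ℝ)/a)) :
    ¬ Summable (fun a : (A \ T : Set ℕ) => (1:ℝ)/a) := by
  intro hs
  apply h
  have hs' : Summable ((A \ T).indicator (fun m : ℕ => (1:ℝ)/m)) :=
    summable_subtype_iff_indicator.mp hs
  have hfin : Summable ((A ∩ T).indicator (fun m : ℕ => (1:ℝ)/m)) := by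
    haveI := hT.to_subtype
    exact summable_subtype_iff_indicator.mp Summable.of_finite
  have hadd := hs'.add hfin
  have : Summable (A.indicator (fun m : ℕ => (1:ℝ)/m)) := by
    convert hadd using 1
    funext m
    by_cases hA : m ∈ A <;> by_cases hTm : m ∈ T <;>
      simp [Set.indicator_apply, hA, hTm]
  exact summable_subtype_iff_indicator.mpr this

lemma aux_hasSum_insert {m : ℕ} {B : Set ℕ} (hm : m ∉ B) {x : ℝ}
    (h : HasSum (fun b : B => (1:ℝ)/b) x) :
    HasSum (fun y : (insert m B : Set ℕ) => (1:ℝ)/y) (1/m + x) := by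
  classical
  have h' : HasSum (B.indicator (fun y : ℕ => (1:ℝ)/y)) x :=
    hasSum_subtype_iff_indicator.mp h
  have h1 : HasSum (({m} : Set ℕ).indicator (fun y : ℕ => (1:ℝ)/y)) (1/m) := by
    have := hasSum_ite_eq m ((1:ℝ)/m)
    convert this using 1
    funext y
    by_cases hy : y = m <;> simp [Set.indicator_apply, hy]
  have hadd := h1.add h'
  have : HasSum ((insert m B : Set ℕ).indicator (fun y : ℕ => (1:ℝ)/y)) (1/m + x) := by
    convert hadd using 1
    funext y
    by_cases hy : y = m <;> by_cases hB : y ∈ B <;>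
      simp [Set.indicator_apply, hy, hB, hm]
  exact hasSum_subtype_iff_indicator.mpr this

lemma aux_two_pow_unique : ∀ a b c e : ℕ, 2^a * (2*b+1) = 2^c*(2*e+1) → a = c ∧ b = e := by
  intro a
  induction a with
  | zero =>
    intro b c e h
    cases c with
    | zero => simp at h; omega
    | succ c' =>
      exfalso
      rw [pow_succ] at h
      set X := 2^c' * (2*e+1) with hX
      rw [pow_zero, one_mul] at h
      have : 2^c' * 2 * (2*e+1) = 2 * X := by ring
      omega
  | succ a' ih =>
    intro b c e h
    cases c with
    | zero =>
      exfalso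
      rw [pow_succ] at h
      set X := 2^a' * (2*b+1) with hX
      rw [pow_zero, one_mul] at h
      have : 2^a' * 2 * (2*b+1) = 2 * X := by ring
      omega
    | succ c' =>
      have e1 : 2^(a'+1) * (2*b+1) = 2 * (2^a' * (2*b+1)) := by ring
      have e2 : 2^(c'+1) * (2*e+1) = 2 * (2^c' * (2*e+1)) := by ring
      have := ih b c' e (by omega)
      omega

lemma aux_two_pow_exists : ∀ u : ℕ, 0 < u → ∃ a b, u = 2^a*(2*b+1) := by
  intro u
  induction u using Nat.strong_induction_on with
  | _ u ih =>
    intro hu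
    rcases Nat.even_or_odd u with he | ho
    · obtain ⟨v, hv⟩ := he
      have hv' : v < u := by omega
      obtain ⟨a, b, hab⟩ := ih v hv' (by omega)
      refine ⟨a+1, b, ?_⟩
      have : 2^(a+1)*(2*b+1) = 2*(2^a*(2*b+1)) := by ring
      omega
    · obtain ⟨b, hb⟩ := ho
      exact ⟨0, b, by omega⟩

noncomputable def greedyStep (A : Set ℕ) (p : ℕ × ℝ) : ℕ × ℝ :=
  (sInf {a : ℕ | a ∈ A ∧ p.1 < a ∧ (1:ℝ)/a < p.2},
   p.2 - 1/(sInf {a : ℕ | a ∈ A ∧ p.1 < a ∧ (1:ℝ)/a < p.2}))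

noncomputable def greedySt (A : Set ℕ) (t : ℝ) (s : ℕ) : ℕ × ℝ := (greedyStep A)^[s] (0, t)

noncomputable def greedyF (A : Set ℕ) (t : ℝ) (s : ℕ) : ℕ := (greedySt A t (s+1)).1

lemma aux_greedy (A : Set ℕ) (t : ℝ) (ht : 0 < t)
    (hdiv : ∀ T : Set ℕ, (A ∩ T).Finite → ¬ Summable (fun a : ↥(A \ T) => (1:ℝ)/a)) :
    ∃ B : Set ℕ, B ⊆ A ∧ B.Infinite ∧ HasSum (fun b : B => (1:ℝ)/b) t := by
  classical
  have hAinf : A.Infinite := by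
    by_contra hfin
    rw [Set.not_infinite] at hfin
    apply hdiv ∅ (hfin.inter_of_left _)
    haveI := (hfin.subset (Set.diff_subset (s := A) (t := ∅))).to_subtype
    exact Summable.of_finite
  have hex : ∀ (M : ℕ) (ε : ℝ), 0 < ε → ∃ a, a ∈ A ∧ M < a ∧ (1:ℝ)/a < ε := by
    intro M ε hε
    obtain ⟨a, haA, ha⟩ := hAinf.exists_gt (max M ⌈1/ε⌉₊)
    refine ⟨a, haA, lt_of_le_of_lt (le_max_left _ _) ha, ?_⟩
    have h2 : (⌈1/ε⌉₊ : ℝ) < a := by exact_mod_cast lt_of_le_of_lt (le_max_right M _) ha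
    have h1 : (1:ℝ)/ε < a := lt_of_le_of_lt (Nat.le_ceil _) h2
    have ha0 : (0:ℝ) < a := lt_of_le_of_lt (by positivity) h1
    rw [div_lt_iff₀ ha0]
    have := (div_lt_iff₀ hε).mp h1
    linarith
  have hstsucc : ∀ s, greedySt A t (s+1) = greedyStep A (greedySt A t s) := by
    intro s
    simp only [greedySt, Function.iterate_succ_apply']
  have hspec : ∀ p : ℕ × ℝ, 0 < p.2 →
      (greedyStep A p).1 ∈ A ∧ p.1 < (greedyStep A p).1 ∧ (1:ℝ)/(greedyStep A p).1 < p.2 ∧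
      (greedyStep A p).2 = p.2 - 1/(greedyStep A p).1 := by
    intro p hp
    have hne : {a : ℕ | a ∈ A ∧ p.1 < a ∧ (1:ℝ)/a < p.2}.Nonempty := hex p.1 p.2 hp
    have hmem := Nat.sInf_mem hne
    exact ⟨hmem.1, hmem.2.1, hmem.2.2, rfl⟩
  have hmin : ∀ p : ℕ × ℝ, ∀ a, a ∈ A → p.1 < a → (1:ℝ)/a < p.2 → (greedyStep A p).1 ≤ a := by
    intro p a h1 h2 h3
    exact Nat.sInf_le ⟨h1, h2, h3⟩
  have hpos : ∀ s, 0 < (greedySt A t s).2 := by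
    intro s
    induction s with
    | zero => exact ht
    | succ s ih =>
      obtain ⟨_, _, h3, h4⟩ := hspec (greedySt A t s) ih
      rw [hstsucc s, h4]
      linarith
  have hfA : ∀ s, greedyF A t s ∈ A := fun s => by
    rw [greedyF, hstsucc s]; exact (hspec _ (hpos s)).1
  have hflt : ∀ s, (greedySt A t s).1 < greedyF A t s := fun s => by
    rw [greedyF, hstsucc s]; exact (hspec _ (hpos s)).2.1
  have hgaplt : ∀ s, (1:ℝ)/(greedyF A t s) < (greedySt A t s).2 := fun s => by
    rw [greedyF, hstsucc s]; exact (hspec _ (hpos s)).2.2.1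
  have hgapeq : ∀ s, (greedySt A t (s+1)).2 = (greedySt A t s).2 - 1/(greedyF A t s) := fun s => by
    rw [greedyF, hstsucc s]; exact (hspec _ (hpos s)).2.2.2
  have hmono : StrictMono (greedyF A t) := strictMono_nat_of_lt_succ (fun s => hflt (s+1))
  have hgapsum : ∀ s, (greedySt A t s).2 = t - ∑ i ∈ Finset.range s, (1:ℝ)/(greedyF A t i) := by
    intro s
    induction s with
    | zero => simp [greedySt]
    | succ s ih => rw [hgapeq s, ih, Finset.sum_range_succ]; ring
  have hbound : ∀ s, ∑ i ∈ Finset.range s, (1:ℝ)/(greedyF A t i) ≤ t := by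
    intro s
    have := hpos s
    rw [hgapsum s] at this
    linarith
  have hnonneg : ∀ s, (0:ℝ) ≤ 1/(greedyF A t s) := fun s => by positivity
  have hsum : Summable (fun s => (1:ℝ)/(greedyF A t s)) := summable_of_sum_range_le hnonneg hbound
  have hinj : Function.Injective (greedyF A t) := hmono.injective
  have htsum : HasSum (fun s => (1:ℝ)/(greedyF A t s)) t := by
    have hle : ∑' s, (1:ℝ)/(greedyF A t s) ≤ t := hsum.tsum_le_of_sum_range_le hbound
    rcases eq_or_lt_of_le hle with heq | hlt
    · have h2 := hsum.hasSum
      rwa [heq] at h2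
    · exfalso
      have hδ0 : 0 < t - ∑' s, (1:ℝ)/(greedyF A t s) := by linarith
      set δ := t - ∑' s, (1:ℝ)/(greedyF A t s) with hδ
      have hgapδ : ∀ s, δ ≤ (greedySt A t s).2 := by
        intro s
        rw [hgapsum s]
        have : ∑ i ∈ Finset.range s, (1:ℝ)/(greedyF A t i) ≤ ∑' s, (1:ℝ)/(greedyF A t s) :=
          hsum.sum_le_tsum (Finset.range s) (fun i _ => hnonneg i)
        rw [hδ]; linarith
      set M := max (greedyF A t 0) ⌈1/δ⌉₊ with hM
      have hsub : ∀ a, a ∈ A → M < a → a ∈ Set.range (greedyF A t) := by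
        intro a haA haM
        have hex2 : ∃ s, a ≤ greedyF A t s := ⟨a, hmono.le_apply⟩
        have hfs₀ : a ≤ greedyF A t (Nat.find hex2) := Nat.find_spec hex2
        rcases eq_or_lt_of_le hfs₀ with heq2 | hlt2
        · exact ⟨Nat.find hex2, heq2.symm⟩
        · exfalso
          have hs₀pos : Nat.find hex2 ≠ 0 := by
            intro h0
            rw [h0] at hlt2
            have : greedyF A t 0 < a := lt_of_le_of_lt (le_max_left _ _) haM
            omega
          obtain ⟨s', hs'⟩ := Nat.exists_eq_succ_of_ne_zero hs₀pos
          have hfs' : greedyF A t s' < a := by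
            have h3 := Nat.find_min hex2 (show s' < Nat.find hex2 by omega)
            omega
          rw [hs'] at hlt2
          simp only [Nat.succ_eq_add_one] at hlt2
          have hcontra : ¬ ((1:ℝ)/a < (greedySt A t (s'+1)).2) := by
            intro hlt3
            have h1 : (greedySt A t (s'+1)).1 < a := hfs'
            have h2 := hmin (greedySt A t (s'+1)) a haA h1 hlt3
            rw [← hstsucc (s'+1)] at h2
            have : greedyF A t (s'+1) ≤ a := h2
            omega
          push_neg at hcontra
          have hδa : δ ≤ (1:ℝ)/a := le_trans (hgapδ (s'+1)) hcontra
          have ha1 : 1 ≤ a := by omega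
          have ha0 : (0:ℝ) < a := by exact_mod_cast ha1
          have haδ : (a:ℝ) ≤ 1/δ := by
            rw [le_div_iff₀ hδ0]
            calc (a:ℝ) * δ ≤ a * (1/a) := mul_le_mul_of_nonneg_left hδa (le_of_lt ha0)
              _ = 1 := by field_simp
          have hceil : a ≤ ⌈1/δ⌉₊ := by
            have := le_trans haδ (Nat.le_ceil (1/δ))
            exact_mod_cast Nat.cast_le.mp (le_trans haδ (Nat.le_ceil _))
          have : ⌈1/δ⌉₊ ≤ M := le_max_right _ _
          omega
      -- contradiction with divergence
      have hcomp : ((Set.range (greedyF A t)).indicator (fun m : ℕ => (1:ℝ)/m)) ∘ (greedyF A t)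
          = fun s => (1:ℝ)/(greedyF A t s) := by
        funext s
        exact Set.indicator_of_mem (Set.mem_range_self s) _
      have hgind : Summable ((Set.range (greedyF A t)).indicator (fun m : ℕ => (1:ℝ)/m)) :=
        (Function.Injective.summable_iff hinj (fun x hx => Set.indicator_of_notMem hx _)).mp
          (hcomp ▸ hsum)
      have hAIic : Summable ((A \ Set.Iic M).indicator (fun m : ℕ => (1:ℝ)/m)) := by
        have h2 := hgind.indicator (A \ Set.Iic M)
        convert h2 using 1
        · rfl
        funext m
        by_cases hmem : m ∈ A \ Set.Iic M
        · have hMm : M < m := by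
            have := hmem.2
            simp only [Set.mem_Iic, not_le] at this
            exact this
          have hmr : m ∈ Set.range (greedyF A t) := hsub m hmem.1 hMm
          rw [Set.indicator_of_mem hmem, Set.indicator_of_mem hmem, Set.indicator_of_mem hmr]
        · rw [Set.indicator_of_notMem hmem, Set.indicator_of_notMem hmem]
      exact hdiv (Set.Iic M) ((Set.finite_Iic M).subset Set.inter_subset_right)
        (summable_subtype_iff_indicator.mpr hAIic)
  refine ⟨Set.range (greedyF A t), ?_, Set.infinite_range_of_injective hinj, ?_⟩
  · rintro b ⟨s, rfl⟩; exact hfA s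
  · exact ((Equiv.ofInjective _ hinj).hasSum_iff
      (f := fun b : Set.range (greedyF A t) => (1:ℝ)/(b:ℕ))).mp htsum

def apClass (N j : ℕ) : Set ℕ := Set.range (fun tt : ℕ => (N - 1) + 2^j + 2^(j+1) * tt)

lemma apClass_strictMono (N j : ℕ) :
    StrictMono (fun tt : ℕ => (N - 1) + 2^j + 2^(j+1) * tt) := by
  intro a b hab
  have h2 : 0 < 2^(j+1) := Nat.pow_pos (by norm_num)
  exact Nat.add_lt_add_left ((Nat.mul_lt_mul_left h2).mpr hab) _

lemma apClass_subset (N j : ℕ) (hN : 1 ≤ N) : apClass N j ⊆ {m | N ≤ m} := by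
  rintro m ⟨tt, rfl⟩
  have h1 : 1 ≤ 2^j := Nat.one_le_two_pow
  simp only [Set.mem_setOf_eq]
  omega

lemma apClass_cover (N : ℕ) (hN : 1 ≤ N) {m : ℕ} (hm : N ≤ m) : ∃ j, m ∈ apClass N j := by
  obtain ⟨a, b, hab⟩ := aux_two_pow_exists (m - (N-1)) (by omega)
  refine ⟨a, b, ?_⟩
  have e : 2^a + 2^(a+1)*b = 2^a*(2*b+1) := by ring
  simp only []
  omega

lemma apClass_disjoint (N : ℕ) {i j : ℕ} (hij : i ≠ j) :
    Disjoint (apClass N i) (apClass N j) := by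
  rw [Set.disjoint_left]
  rintro m ⟨a, rfl⟩ ⟨b, hb⟩
  simp only [] at hb
  have e1 : 2^i + 2^(i+1)*a = 2^i*(2*a+1) := by ring
  have e2 : 2^j + 2^(j+1)*b = 2^j*(2*b+1) := by ring
  have : 2^j*(2*b+1) = 2^i*(2*a+1) := by omega
  exact hij ((aux_two_pow_unique j b i a this).1).symm

lemma apClass_infinite (N j : ℕ) : (apClass N j).Infinite :=
  Set.infinite_range_of_injective (apClass_strictMono N j).injective

lemma apClass_not_summable (N j : ℕ) (hN : 1 ≤ N) :
    ¬ Summable (fun a : ↥(apClass N j) => (1:ℝ)/a) := by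
  intro h
  apply aux_ap_not_summable (N - 1 + 2^j) (2^(j+1))
    (by have : 1 ≤ 2^j := Nat.one_le_two_pow; omega)
    (Nat.pow_pos (by norm_num))
  have h2 : Summable ((fun a : ↥(apClass N j) => (1:ℝ)/a) ∘
      (Equiv.ofInjective _ (apClass_strictMono N j).injective)) :=
    (Equiv.summable_iff _).mpr h
  refine h2.congr (fun tt => ?_)
  show (1:ℝ)/(((N - 1 + 2^j + 2^(j+1)*tt : ℕ)) : ℝ) = _
  push_cast
  ring

lemma stage_exists (N n d : ℕ) (hn : 0 < n) (hd : 0 < d) (hNd : 2*d ≤ N)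
    (j : ℕ) (U : Set ℕ) (hUfin : (apClass N j ∩ U).Finite) :
    ∃ V : Set ℕ, V ⊆ {m | N ≤ m} \ U ∧ V.Infinite ∧
      HasSum (fun y : V => (1:ℝ)/y) ((n:ℝ)/d) ∧
      sInf ({m | N ≤ m} \ U) ∈ V ∧
      ∀ i, i ≠ j → apClass N i ∩ V ⊆ {sInf ({m | N ≤ m} \ U)} := by
  have hN1 : 1 ≤ N := by omega
  have hdiffinf : (apClass N j \ U).Infinite := by
    have he : apClass N j \ (apClass N j ∩ U) = apClass N j \ U := by
      ext x; simp only [mem_diff, mem_inter_iff]; tauto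
    rw [← he]
    exact (apClass_infinite N j).diff hUfin
  have hne : ({m | N ≤ m} \ U).Nonempty := by
    obtain ⟨x, hx⟩ := hdiffinf.nonempty
    exact ⟨x, apClass_subset N j hN1 hx.1, hx.2⟩
  have hm0 : sInf ({m | N ≤ m} \ U) ∈ {m | N ≤ m} \ U := Nat.sInf_mem hne
  set m0 := sInf ({m | N ≤ m} \ U) with hm0def
  have hm0N : N ≤ m0 := hm0.1
  have hd0 : (0:ℝ) < d := by exact_mod_cast hd
  have hm0pos : (0:ℝ) < m0 := by
    have : 0 < m0 := by omega
    exact_mod_cast this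
  have ht : 0 < (n:ℝ)/d - 1/m0 := by
    have hrec : (1:ℝ)/m0 ≤ 1/(2*d) := by
      apply one_div_le_one_div_of_le (by positivity)
      exact_mod_cast le_trans hNd hm0N
    have hnd : (1:ℝ)/d ≤ (n:ℝ)/d := by
      gcongr
      exact_mod_cast hn
    have h2 : (1:ℝ)/(2*d) < 1/d := by
      rw [div_lt_div_iff₀ (by positivity) hd0]
      linarith
    linarith
  have hdiv : ∀ T : Set ℕ, ((apClass N j \ (U ∪ {m0})) ∩ T).Finite →
      ¬ Summable (fun a : ↥((apClass N j \ (U ∪ {m0})) \ T) => (1:ℝ)/a) := by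
    intro T hTfin
    have hset : (apClass N j \ (U ∪ {m0})) \ T = apClass N j \ (U ∪ {m0} ∪ T) := by
      ext x
      simp only [mem_diff, mem_union, mem_singleton_iff]
      tauto
    rw [hset]
    apply aux_not_summable_diff ?_ (apClass_not_summable N j hN1)
    have h1 : apClass N j ∩ (U ∪ {m0} ∪ T) ⊆
        ((apClass N j ∩ U) ∪ {m0}) ∪ ((apClass N j \ (U ∪ {m0})) ∩ T) := by
      rintro x ⟨hx1, hx2⟩
      simp only [mem_union, mem_singleton_iff, mem_inter_iff, mem_diff] at *
      tauto
    exact (((hUfin.union (finite_singleton m0)).union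
      (hTfin)).subset h1)
  obtain ⟨B, hB1, hB2, hB3⟩ := aux_greedy _ _ ht hdiv
  have hm0B : m0 ∉ B := fun h => (hB1 h).2 (by simp)
  refine ⟨insert m0 B, ?_, hB2.mono (subset_insert _ _), ?_, mem_insert _ _, ?_⟩
  · rintro x hx
    rcases hx with rfl | hxB
    · exact hm0
    · have := hB1 hxB
      exact ⟨apClass_subset N j hN1 this.1, fun hU => this.2 (Or.inl hU)⟩
  · have h := aux_hasSum_insert hm0B hB3
    have e : (1:ℝ)/m0 + ((n:ℝ)/d - 1/m0) = (n:ℝ)/d := by ring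
    rwa [e] at h
  · intro i hij x hx
    rcases hx.2 with rfl | hxB
    · exact mem_singleton_iff.mpr rfl
    · exact absurd ((hB1 hxB).1) (Set.disjoint_left.mp (apClass_disjoint N hij) hx.1)

theorem partition_into_infinite_sets (n d k : ℕ) (hn : 0 < n) (hd : 0 < d) (hk : 0 < k)
    (hcop : Nat.Coprime n d) :
    ∃ Y : ℕ → Set ℕ,
      (∀ j, (Y j).Infinite) ∧
      (Pairwise fun i j => Disjoint (Y i) (Y j)) ∧
      (⋃ j, Y j) = {m : ℕ | 2 * k * d ≤ m} ∧
      ∀ j, HasSum (fun y : Y j => (1 : ℝ) / (y : ℕ)) ((n : ℝ) / d) := by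
  classical
  set N := 2*k*d with hN
  have hNd : 2*d ≤ N := by
    rw [hN]
    have h2k : 2 ≤ 2*k := by omega
    exact Nat.mul_le_mul_right d h2k
  set SS : Set ℕ := {m : ℕ | N ≤ m} with hSS
  have hchoice : ∀ (j : ℕ) (U : Set ℕ), ∃ V : Set ℕ,
      (apClass N j ∩ U).Finite →
      (V ⊆ SS \ U ∧ V.Infinite ∧ HasSum (fun y : V => (1:ℝ)/y) ((n:ℝ)/d) ∧
       sInf (SS \ U) ∈ V ∧ ∀ i, i ≠ j → apClass N i ∩ V ⊆ {sInf (SS \ U)}) := by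
    intro j U
    by_cases h : (apClass N j ∩ U).Finite
    · obtain ⟨V, hV⟩ := stage_exists N n d hn hd hNd j U h
      exact ⟨V, fun _ => hV⟩
    · exact ⟨∅, fun hh => absurd hh h⟩
  choose Ys hYs using hchoice
  set T : ℕ → Set ℕ := fun j => Nat.rec (motive := fun _ => Set ℕ) ∅ (fun i U => U ∪ Ys i U) j
    with hT
  have hT0 : T 0 = ∅ := by rw [hT]; rfl
  have hTsucc : ∀ j, T (j+1) = T j ∪ Ys j (T j) := by intro j; rw [hT]
  set Y : ℕ → Set ℕ := fun j => Ys j (T j) with hY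
  have hInv : ∀ j, T j ⊆ SS ∧ ∀ i, j ≤ i → (apClass N i ∩ T j).Finite := by
    intro j
    induction j with
    | zero =>
      refine ⟨by rw [hT0]; exact empty_subset _, fun i _ => by rw [hT0]; simp⟩
    | succ j ih =>
      have hstage := hYs j (T j) (ih.2 j le_rfl)
      constructor
      · rw [hTsucc]
        exact union_subset ih.1 (hstage.1.trans diff_subset)
      · intro i hi
        rw [hTsucc, Set.inter_union_distrib_left]
        apply Set.Finite.union (ih.2 i (by omega))
        apply Set.Finite.subset (finite_singleton (sInf (SS \ T j)))
        exact hstage.2.2.2.2 i (by omega)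
  have hstageY : ∀ j, Y j ⊆ SS \ T j ∧ (Y j).Infinite ∧
      HasSum (fun y : (Y j) => (1:ℝ)/y) ((n:ℝ)/d) ∧ sInf (SS \ T j) ∈ Y j := by
    intro j
    have h := hYs j (T j) ((hInv j).2 j le_rfl)
    exact ⟨h.1, h.2.1, h.2.2.1, h.2.2.2.1⟩
  have hTmono : Monotone T :=
    monotone_nat_of_le_succ (fun j => by rw [hTsucc]; exact subset_union_left)
  have hYT : ∀ j, Y j ⊆ T (j+1) := fun j => by rw [hTsucc]; exact subset_union_right
  have hcov : ∀ j x, x ∈ SS → x < N + j → x ∈ T j := by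
    intro j
    induction j with
    | zero =>
      intro x hx hlt
      exfalso
      have : N ≤ x := hx
      omega
    | succ j ih =>
      intro x hx hlt
      by_cases hxT : x ∈ T j
      · exact hTmono (by omega : j ≤ j + 1) hxT
      · have hxmem : x ∈ SS \ T j := ⟨hx, hxT⟩
        have h1 : sInf (SS \ T j) ≤ x := Nat.sInf_le hxmem
        have h2 := (hstageY j).2.2.2
        have h3 : sInf (SS \ T j) ∈ SS \ T j := (hstageY j).1 h2
        have h4 : ¬ (sInf (SS \ T j) < N + j) := fun hc => h3.2 (ih _ h3.1 hc)
        have h5 : sInf (SS \ T j) = x := by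
          have : N ≤ sInf (SS \ T j) := h3.1
          omega
        rw [h5] at h2
        exact hYT j h2
  refine ⟨Y, fun j => (hstageY j).2.1, ?_, ?_, fun j => (hstageY j).2.2.1⟩
  · have key : ∀ a b, a < b → Disjoint (Y a) (Y b) := by
      intro a b hab
      rw [Set.disjoint_left]
      intro x hxa hxb
      have h1 : x ∈ T b := hTmono (by omega : a + 1 ≤ b) (hYT a hxa)
      exact ((hstageY b).1 hxb).2 h1
    intro i j hij
    rcases lt_or_gt_of_ne hij with h | h
    · exact key i j h
    · exact (key j i h).symm
  · apply subset_antisymm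
    · apply Set.iUnion_subset
      intro j
      exact (hstageY j).1.trans diff_subset
    · intro x hx
      have hTY : ∀ j, T j ⊆ ⋃ i, Y i := by
        intro j
        induction j with
        | zero => rw [hT0]; exact empty_subset _
        | succ j ih =>
          rw [hTsucc]
          exact union_subset ih (subset_iUnion Y j)
      exact hTY (x+1) (hcov (x+1) x hx (by omega))
end

section
/- The set of all finite harmonic segment sums {Σ_{i=n}^{n+k} 1/i : n, k ∈ ℕ, n ≥ 1} is dense in the positive real numbers. -/
open Finset Filter

lemma harm_tendsto (n : ℕ) :
    Tendsto (fun k => ∑ i ∈ Finset.Icc n (n + k), (1 : ℝ) / i) atTop atTop := by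
  have hH : Tendsto (fun m => ∑ j ∈ Finset.range m, (1 : ℝ) / (j + 1)) atTop atTop :=
    Real.tendsto_sum_range_one_div_nat_succ_atTop
  have hG : Tendsto (fun m => ∑ j ∈ Finset.range m, (1 : ℝ) / j) atTop atTop := by
    rw [← tendsto_add_atTop_iff_nat 1]
    have heq : (fun m => ∑ j ∈ Finset.range (m + 1), (1 : ℝ) / j)
        = fun m => ∑ j ∈ Finset.range m, (1 : ℝ) / (j + 1) := by
      funext m
      rw [Finset.sum_range_succ']
      push_cast
      simp
    rw [heq]
    exact hH
  have heq2 : (fun k => ∑ i ∈ Finset.Icc n (n + k), (1 : ℝ) / i)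
      = fun k => (∑ j ∈ Finset.range (n + k + 1), (1 : ℝ) / j)
        - ∑ j ∈ Finset.range n, (1 : ℝ) / j := by
    funext k
    rw [← Finset.Ico_add_one_right_eq_Icc, Finset.sum_Ico_eq_sub _ (by omega)]
  rw [heq2]
  have h1 : Tendsto (fun k : ℕ => n + k + 1) atTop atTop :=
    tendsto_atTop_atTop_of_monotone (fun a b h => by omega) (fun b => ⟨b, by omega⟩)
  exact tendsto_atTop_add_const_right atTop _ (hG.comp h1)

theorem harmonic_segments_dense (x : ℝ) (hx : 0 < x) :
    x ∈ closure {r : ℝ | ∃ n k : ℕ, 0 < n ∧ r = ∑ i ∈ Finset.Icc n (n + k), (1 : ℝ) / i} := by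
  rw [Metric.mem_closure_iff]
  intro ε hε
  set δ : ℝ := min ε x / 2 with hδdef
  have hδ : 0 < δ := by positivity
  have hδε : δ < ε := by
    have : min ε x ≤ ε := min_le_left _ _
    simp only [hδdef]; linarith
  have hδx : δ ≤ x / 2 := by
    have : min ε x ≤ x := min_le_right _ _
    simp only [hδdef]; linarith
  obtain ⟨n, hn1⟩ := exists_nat_one_div_lt hδ
  set m := n + 1 with hm
  have hm0 : 0 < m := by omega
  have hm1 : 1 / (m : ℝ) < δ := by
    have : ((m : ℝ)) = (n : ℝ) + 1 := by simp [hm]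
    rw [this]; exact hn1
  set f : ℕ → ℝ := fun k => ∑ i ∈ Finset.Icc m (m + k), (1 : ℝ) / i with hf
  have hstep : ∀ k, f (k + 1) = f k + 1 / (m + k + 1 : ℕ) := by
    intro k
    simp only [hf]
    rw [show m + (k + 1) = (m + k) + 1 by omega,
      Finset.sum_Icc_succ_top (by omega : m ≤ m + k + 1)]
  have hex : ∃ k, x - δ < f k := by
    have := (harm_tendsto m).eventually (eventually_gt_atTop (x - δ))
    exact this.exists
  classical
  set k := Nat.find hex with hk
  have hk1 : x - δ < f k := Nat.find_spec hex
  have hk2 : f k < x := by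
    rcases Nat.eq_zero_or_pos k with h0 | hpos
    · exfalso
      have hf0 : f 0 = 1 / (m : ℝ) := by simp [hf]
      rw [h0, hf0] at hk1
      have : 1 / (m : ℝ) < x - δ := by linarith
      linarith
    · obtain ⟨k', hke⟩ : ∃ k', k = k' + 1 := ⟨k - 1, by omega⟩
      have hk' : ¬ (x - δ < f k') := Nat.find_min hex (by omega)
      push_neg at hk'
      have hle : (1 : ℝ) / (m + k' + 1 : ℕ) ≤ 1 / (m : ℝ) := by
        apply one_div_le_one_div_of_le
        · exact_mod_cast hm0
        · push_cast; linarith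
      have := hstep k'
      rw [hke, this]
      calc f k' + 1 / (m + k' + 1 : ℕ) ≤ (x - δ) + 1 / (m : ℝ) := by linarith
        _ < (x - δ) + δ := by linarith
        _ = x := by ring
  refine ⟨f k, ⟨m, k, hm0, rfl⟩, ?_⟩
  rw [Real.dist_eq, abs_lt]
  constructor <;> linarith
end

section
/- For all positive integers m ≤ n with (m, n) ≠ (1, 1), the sum 1/m + 1/(m+1) + ⋯ + 1/n is not an integer. -/
/-- In an interval, the maximal 2-adic valuation is attained uniquely. -/
lemma kurschak_unique_max (m n j : ℕ) (hm : 0 < m) (hj : j ∈ Finset.Icc m n)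
    (hmax : ∀ i ∈ Finset.Icc m n, padicValNat 2 i ≤ padicValNat 2 j)
    (i : ℕ) (hi : i ∈ Finset.Icc m n) (hne : i ≠ j) :
    padicValNat 2 i < padicValNat 2 j := by
  set k := padicValNat 2 j with hk
  rcases lt_or_ge (padicValNat 2 i) k with hlt | hge
  · exact hlt
  have heq : padicValNat 2 i = k := le_antisymm (hmax i hi) hge
  exfalso
  simp only [Finset.mem_Icc] at hi hj
  have hi0 : i ≠ 0 := by omega
  have hj0 : j ≠ 0 := by omega
  have hdvdi : 2 ^ k ∣ i := (padicValNat_dvd_iff_le hi0).mpr heq.ge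
  have hdvdj : 2 ^ k ∣ j := pow_padicValNat_dvd
  obtain ⟨a, ha⟩ := hdvdi
  obtain ⟨b, hb⟩ := hdvdj
  have hao : ¬ 2 ∣ a := by
    intro ⟨c, hc⟩
    have : 2 ^ (k + 1) ∣ i := ⟨c, by rw [ha, hc]; ring⟩
    have := (padicValNat_dvd_iff_le hi0).mp this
    omega
  have hbo : ¬ 2 ∣ b := by
    intro ⟨c, hc⟩
    have : 2 ^ (k + 1) ∣ j := ⟨c, by rw [hb, hc]; ring⟩
    have := (padicValNat_dvd_iff_le hj0).mp this
    omega
  have hab : a ≠ b := by rintro rfl; exact hne (ha.trans hb.symm)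
  -- take c = min a b + 1, which is even, and x = 2^k * c lies in [m,n]
  set c := min a b + 1 with hc
  have hce : 2 ∣ c := by
    rcases Nat.even_or_odd (min a b) with he | ho
    · exfalso
      rcases min_choice a b with hm1 | hm1 <;> rw [hm1] at he
      · exact hao he.two_dvd
      · exact hbo he.two_dvd
    · simpa [hc] using (Nat.even_add_one.mpr (Nat.not_even_iff_odd.mpr ho)).two_dvd
  have hcle : c ≤ max a b := by
    rcases Nat.lt_or_ge a b with h1 | h1
    · simp [hc, min_eq_left h1.le, max_eq_right h1.le]; omega
    · have h1' : b < a := lt_of_le_of_ne h1 (Ne.symm hab)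
      simp [hc, min_eq_right h1'.le, max_eq_left h1'.le]; omega
  set x := 2 ^ k * c with hx
  have hxmem : m ≤ x ∧ x ≤ n := by
    constructor
    · calc m ≤ 2 ^ k * min a b := by
            rcases min_choice a b with hm1 | hm1 <;> rw [hm1]
            · omega
            · omega
        _ ≤ x := by
            have : min a b ≤ c := by omega
            exact Nat.mul_le_mul_left _ this
    · calc x ≤ 2 ^ k * max a b := Nat.mul_le_mul_left _ hcle
        _ ≤ n := by
            rcases max_choice a b with hm1 | hm1 <;> rw [hm1]
            · omega
            · omega
  have hx0 : x ≠ 0 := by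
    have : 0 < m := hm
    omega
  have hdvdx : 2 ^ (k + 1) ∣ x := by
    obtain ⟨d, hd⟩ := hce
    exact ⟨d, by rw [hx, hd]; ring⟩
  have hvx : k + 1 ≤ padicValNat 2 x := (padicValNat_dvd_iff_le hx0).mp hdvdx
  have := hmax x (Finset.mem_Icc.mpr hxmem)
  omega

theorem kurschak (m n : ℕ) (hm : 0 < m) (hmn : m ≤ n) (h : (m, n) ≠ (1, 1)) :
    ¬ ∃ z : ℤ, (∑ i ∈ Finset.Icc m n, (1 : ℚ) / i) = z := by
  rintro ⟨z, hz⟩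
  rcases eq_or_lt_of_le hmn with rfl | hlt
  · -- single term case
    rw [Finset.Icc_self, Finset.sum_singleton] at hz
    have hm2 : 2 ≤ m := by
      rcases Nat.lt_or_ge m 2 with h1 | h1
      · interval_cases m
        · exact absurd rfl h
      · exact h1
    have h1 : (0:ℚ) < 1 / m := by positivity
    have h2 : (1:ℚ) / m < 1 := by
      rw [div_lt_one (by positivity)]
      exact_mod_cast by omega
    rw [hz] at h1 h2
    have hz1 : (0:ℤ) < z := by exact_mod_cast h1
    have hz2 : (z:ℤ) < 1 := by exact_mod_cast h2
    omega
  · -- interval of length ≥ 2 : use 2-adic valuation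
    set F : ℕ → ℚ := fun i => if i = 0 then 1 else 1 / i with hF
    have hFpos : ∀ i, 0 < F i := by
      intro i
      by_cases h0 : i = 0 <;> simp [hF, h0]
      positivity
    have hsum : ∑ i ∈ Finset.Icc m n, (1:ℚ)/i = ∑ i ∈ Finset.Icc m n, F i := by
      refine Finset.sum_congr rfl fun i hi => ?_
      have : i ≠ 0 := by
        simp only [Finset.mem_Icc] at hi; omega
      simp [hF, this]
    have hFval : ∀ i ∈ Finset.Icc m n, padicValRat 2 (F i) = -(padicValNat 2 i : ℤ) := by
      intro i hi
      have hi0 : i ≠ 0 := by simp only [Finset.mem_Icc] at hi; omega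
      simp [hF, hi0, one_div, padicValRat.inv, padicValRat.of_nat]
    obtain ⟨j, hj, hmax⟩ := (Finset.Icc m n).exists_max_image (padicValNat 2)
      ⟨m, Finset.mem_Icc.mpr ⟨le_refl m, hmn⟩⟩
    -- k ≥ 1
    have hk1 : 1 ≤ padicValNat 2 j := by
      rcases Nat.even_or_odd m with he | ho
      · have := hmax m (Finset.mem_Icc.mpr ⟨le_refl m, hmn⟩)
        have h1 : 1 ≤ padicValNat 2 m :=
          one_le_padicValNat_of_dvd hm.ne' he.two_dvd
        omega
      · have hmem : m + 1 ∈ Finset.Icc m n := Finset.mem_Icc.mpr ⟨by omega, by omega⟩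
        have := hmax (m+1) hmem
        have h1 : 1 ≤ padicValNat 2 (m+1) :=
          one_le_padicValNat_of_dvd (by omega) (Nat.even_add_one.mpr (Nat.not_even_iff_odd.mpr ho)).two_dvd
        omega
    -- split sum
    have hjmem := hj
    have hsplit : ∑ i ∈ Finset.Icc m n, F i = F j + ∑ i ∈ (Finset.Icc m n).erase j, F i :=
      (Finset.add_sum_erase _ F hj).symm
    have herase_ne : ((Finset.Icc m n).erase j).Nonempty := by
      simp only [Finset.mem_Icc] at hj
      rcases Nat.lt_or_ge j n with h1 | h1
      · exact ⟨j+1, Finset.mem_erase.mpr ⟨by omega, Finset.mem_Icc.mpr ⟨by omega, by omega⟩⟩⟩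
      · exact ⟨m, Finset.mem_erase.mpr ⟨by omega, Finset.mem_Icc.mpr ⟨le_refl m, hmn⟩⟩⟩
    have hkey : ∀ i ∈ (Finset.Icc m n).erase j, padicValRat 2 (F j) < padicValRat 2 (F i) := by
      intro i hi
      obtain ⟨hne, hi'⟩ := Finset.mem_erase.mp hi
      rw [hFval i hi', hFval j hj]
      have := kurschak_unique_max m n j hm hj hmax i hi' hne
      omega
    have hlt2 : padicValRat 2 (F j) < padicValRat 2 (∑ i ∈ (Finset.Icc m n).erase j, F i) :=
      padicValRat.lt_sum_of_lt herase_ne hkey hFpos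
    have hrest_pos : 0 < ∑ i ∈ (Finset.Icc m n).erase j, F i :=
      Finset.sum_pos (fun i _ => hFpos i) herase_ne
    have hne0 : F j + ∑ i ∈ (Finset.Icc m n).erase j, F i ≠ 0 := by
      have := hFpos j; positivity
    have hval_total : padicValRat 2 (∑ i ∈ Finset.Icc m n, F i) = padicValRat 2 (F j) := by
      rw [hsplit]
      exact padicValRat.add_eq_of_lt hne0 (hFpos j).ne' hrest_pos.ne' hlt2
    have hvneg : padicValRat 2 (∑ i ∈ Finset.Icc m n, F i) < 0 := by
      rw [hval_total, hFval j hj]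
      omega
    -- but the sum equals an integer z > 0
    rw [hsum] at hz
    have hspos : 0 < ∑ i ∈ Finset.Icc m n, F i :=
      Finset.sum_pos (fun i _ => hFpos i) ⟨m, Finset.mem_Icc.mpr ⟨le_refl m, hmn⟩⟩
    rw [hz] at hvneg hspos
    have hz0 : z ≠ 0 := by exact_mod_cast hspos.ne'
    rw [padicValRat.of_int] at hvneg
    have : 0 ≤ padicValInt 2 z := by
      unfold padicValInt
      positivity
    omega
end
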